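/- Under the uniform magnitude condition θ_{m,k} = c_m σ_{m,k} (c_m ≥ 0, σ_{m,k} ∈ {±1}) for the Faber–Schauder coefficients, the normalized dyadic increment of the resulting series x over the level-n interval [k2^{−n}, (k+1)2^{−n}] admits the representation 2^{n/p}(x((k+1)2^{−n}) − x(k2^{−n})) = Σ_{j=1}^n ρ^j y_{n−j} ε_j(k), where ρ := 2^{−(1−1/p)}, y_m := 2^{m(1/p−1/2)} c_m, and ε_j(k) ∈ {±1} is the product of the coefficient sign and the Haar sign of the level-(n−j) Schauder function on that interval. -/

import Mathlib

/-- The Faber–Schauder function `e_{m,k}`. -/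
noncomputable def faberSchauder (m k : ℕ) (t : ℝ) : ℝ :=
  (2 : ℝ) ^ ((m : ℝ) / 2) *
    max 0 ((2 : ℝ) ^ (-(m : ℝ) - 1) - |t - (2 * (k : ℝ) + 1) / 2 ^ (m + 1)|)

lemma fs_zero_high (m n i a : ℕ) (h : n ≤ m) : faberSchauder m i ((a : ℝ) / 2 ^ n) = 0 := by
  unfold faberSchauder
  have hpow : (2:ℝ) ^ (m+1) = 2 ^ n * 2 ^ (m+1-n) := by
    rw [← pow_add]; congr 1; omega
  have hd : (a : ℝ) / 2 ^ n - (2 * i + 1) / 2 ^ (m + 1) =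
      (((a : ℤ) * 2 ^ (m+1-n) - (2 * i + 1) : ℤ) : ℝ) / 2 ^ (m+1) := by
    rw [hpow]
    field_simp
    push_cast
    ring
  have hodd : ((a : ℤ) * 2 ^ (m+1-n) - (2 * i + 1)) ≠ 0 := by
    have h1 : (2:ℤ)^(m+1-n) = 2 * 2^(m-n) := by rw [← pow_succ']; congr 1; omega
    intro hc
    have : (2*i+1 : ℤ) = 2 * ((a:ℤ) * 2^(m-n)) := by rw [show (2*(i:ℤ)+1) = (a:ℤ)*2^(m+1-n) from by omega, h1]; ring
    omega
  have habs : (1:ℝ) ≤ |(((a : ℤ) * 2 ^ (m+1-n) - (2 * i + 1) : ℤ) : ℝ)| := by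
    rw [← Int.cast_abs]
    exact_mod_cast Int.one_le_abs hodd
  have hr : (2:ℝ) ^ (-(m:ℝ) - 1) = 1 / 2 ^ (m+1) := by
    rw [eq_div_iff (by positivity), ← Real.rpow_natCast 2 (m+1), ← Real.rpow_add two_pos]
    norm_num
  have hle : (2 : ℝ) ^ (-(m : ℝ) - 1) -
      |(a : ℝ) / 2 ^ n - (2 * i + 1) / 2 ^ (m + 1)| ≤ 0 := by
    rw [hd, hr, abs_div, abs_of_pos (a := (2:ℝ)^(m+1)) (by positivity)]
    rw [sub_nonpos, div_le_div_iff₀ (by positivity) (by positivity)]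
    nlinarith [pow_pos (by norm_num : (0:ℝ) < 2) (m+1)]
  rw [max_eq_left hle, mul_zero]

lemma fs_eval_int (m n i a : ℕ) (h : m < n) :
    faberSchauder m i ((a : ℝ) / 2 ^ n) =
      2 ^ ((m : ℝ) / 2) *
        ((max 0 (2 ^ (n - m - 1) - |(a : ℤ) - (2 * i + 1) * 2 ^ (n - m - 1)|) : ℤ) : ℝ) / 2 ^ n := by
  unfold faberSchauder
  have hpow : (2:ℝ) ^ n = 2 ^ (m+1) * 2 ^ (n-m-1) := by
    rw [← pow_add]; congr 1; omega
  have hc : ((n - m - 1 : ℕ) : ℝ) = (n : ℝ) - m - 1 := by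
    have h1 : ((n - m - 1 : ℕ) : ℤ) = (n : ℤ) - m - 1 := by omega
    exact_mod_cast congrArg (Int.cast : ℤ → ℝ) h1
  have hr : (2:ℝ) ^ (-(m:ℝ) - 1) = ((2:ℤ) ^ (n-m-1) : ℤ) / 2 ^ n := by
    push_cast
    rw [← Real.rpow_natCast 2 (n-m-1), ← Real.rpow_natCast 2 n, ← Real.rpow_sub two_pos]
    congr 1
    rw [hc]; ring
  have hd : (a : ℝ) / 2 ^ n - (2 * i + 1) / 2 ^ (m + 1) =
      (((a : ℤ) - (2 * i + 1) * 2 ^ (n-m-1) : ℤ) : ℝ) / 2 ^ n := by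
    rw [hpow]
    field_simp
    push_cast
    ring
  rw [hd, hr, abs_div, abs_of_pos (a := (2:ℝ)^n) (by positivity), div_sub_div_same,
    ← Int.cast_abs, ← Int.cast_sub]
  have hmax : max (0:ℝ) (((2 ^ (n - m - 1) - |(a:ℤ) - (2 * i + 1) * 2 ^ (n - m - 1)| : ℤ) : ℝ) / 2 ^ n)
      = ((max 0 (2 ^ (n - m - 1) - |(a:ℤ) - (2 * i + 1) * 2 ^ (n - m - 1)|) : ℤ) : ℝ) / 2 ^ n := by
    rw [Int.cast_max]
    push_cast
    rw [← max_div_div_right (c := (2:ℝ)^n) (by positivity) 0, zero_div]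
  rw [hmax]
  ring

lemma fs_zero_far (m n i a : ℕ) (h : m < n)
    (ha : (2:ℤ) ^ (n-m-1) ≤ |(a : ℤ) - (2 * i + 1) * 2 ^ (n-m-1)|) :
    faberSchauder m i ((a : ℝ) / 2 ^ n) = 0 := by
  rw [fs_eval_int m n i a h, max_eq_left (by omega)]
  norm_num

lemma fs_inc_ne (m n k i : ℕ) (h : m < n) (hi : i ≠ k / 2 ^ (n - m)) :
    faberSchauder m i (((k:ℝ)+1) / 2 ^ n) = 0 ∧ faberSchauder m i ((k:ℝ) / 2 ^ n) = 0 := by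
  have hq : 0 < 2 ^ (n - m) := by positivity
  have h2 : (2:ℤ) ^ (n - m) = 2 * 2 ^ (n - m - 1) := by
    rw [← pow_succ']; congr 1; omega
  have hcase : k + 1 ≤ i * 2 ^ (n - m) ∨ (i + 1) * 2 ^ (n - m) ≤ k := by
    rcases lt_or_gt_of_ne hi with h1 | h1
    · right
      calc (i+1) * 2^(n-m) ≤ (k / 2^(n-m)) * 2^(n-m) := by
            exact Nat.mul_le_mul_right _ h1
        _ ≤ k := Nat.div_mul_le_self _ _
    · left
      have := (Nat.div_lt_iff_lt_mul hq).mp h1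
      omega
  have key : ∀ a : ℕ, a = k ∨ a = k + 1 →
      (2:ℤ) ^ (n-m-1) ≤ |(a : ℤ) - (2 * i + 1) * 2 ^ (n-m-1)| := by
    intro a hA
    rw [le_abs]
    have hc1 : ((i * 2 ^ (n-m) : ℕ) : ℤ) = 2 * (i:ℤ) * 2 ^ (n-m-1) := by
      push_cast [h2]; ring
    have hc2 : (((i+1) * 2 ^ (n-m) : ℕ) : ℤ) = (2 * (i:ℤ) + 2) * 2 ^ (n-m-1) := by
      push_cast [h2]; ring
    rcases hcase with hc | hc
    · right
      have : ((k:ℤ) + 1) ≤ 2 * (i:ℤ) * 2 ^ (n-m-1) := by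
        rw [← hc1]; exact_mod_cast hc
      rcases hA with rfl | rfl <;> push_cast <;> linarith
    · left
      have : ((2 * (i:ℤ) + 2) * 2 ^ (n-m-1)) ≤ (k:ℤ) := by
        rw [← hc2]; exact_mod_cast hc
      rcases hA with rfl | rfl <;> push_cast <;> linarith
  constructor
  · have := fs_zero_far m n i (k+1) h (key (k+1) (Or.inr rfl))
    rwa [Nat.cast_add, Nat.cast_one] at this
  · exact fs_zero_far m n i k h (key k (Or.inl rfl))

lemma fs_inc_main (m n k : ℕ) (h : m < n) :
    faberSchauder m (k / 2 ^ (n-m)) (((k:ℝ)+1) / 2 ^ n)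
      - faberSchauder m (k / 2 ^ (n-m)) ((k:ℝ) / 2 ^ n)
      = (if k / 2 ^ (n - m - 1) % 2 = 0 then (1:ℝ) else -1) * 2 ^ ((m:ℝ)/2) / 2 ^ n := by
  set q := n - m with hq
  set i₀ := k / 2 ^ q with hi₀
  set r := k % 2 ^ q with hr
  have hB : 0 < 2 ^ (q - 1) := by positivity
  have h2 : (2:ℕ) ^ q = 2 ^ (q-1) * 2 := by
    rw [← pow_succ]; congr 1; omega
  have hkd : k = 2 ^ (q-1) * (2 * i₀) + r := by
    have h5 : 2 ^ q * i₀ + r = k := Nat.div_add_mod k (2 ^ q)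
    calc k = 2 ^ q * i₀ + r := h5.symm
      _ = 2 ^ (q-1) * (2 * i₀) + r := by rw [h2]; ring
  have hrlt : r < 2 ^ (q-1) * 2 := by
    rw [← h2]; exact Nat.mod_lt _ (by positivity)
  have hpar : k / 2 ^ (q - 1) % 2 = 0 ↔ r < 2 ^ (q-1) := by
    rw [hkd, Nat.mul_add_div hB]
    rcases lt_or_ge r (2 ^ (q-1)) with hc | hc
    · rw [Nat.div_eq_of_lt hc]; omega
    · have h6 : r / 2 ^ (q-1) = 1 := Nat.div_eq_of_lt_le (by omega) (by omega)
      rw [h6]; omega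
  have hkz : (k:ℤ) = 2 ^ (q-1) * (2 * (i₀:ℤ)) + r := by exact_mod_cast hkd
  have hnm1 : n - m - 1 = q - 1 := rfl
  have hd1 : (k : ℤ) - (2 * i₀ + 1) * 2 ^ (n-m-1) = (r:ℤ) - 2 ^ (q-1) := by
    rw [hnm1]; linear_combination hkz
  have hd2 : ((k+1 : ℕ) : ℤ) - (2 * i₀ + 1) * 2 ^ (n-m-1) = (r:ℤ) + 1 - 2 ^ (q-1) := by
    rw [hnm1]; push_cast; linear_combination hkz
  have e2 : faberSchauder m i₀ (((k:ℝ)+1) / 2 ^ n) =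
      2 ^ ((m:ℝ)/2) * ((max 0 (2 ^ (q-1) - |(r:ℤ) + 1 - 2 ^ (q-1)|) : ℤ) : ℝ) / 2 ^ n := by
    have h7 := fs_eval_int m n i₀ (k+1) h
    rw [hd2, hnm1] at h7
    rw [← h7]; push_cast; ring_nf
  have e1 : faberSchauder m i₀ ((k:ℝ) / 2 ^ n) =
      2 ^ ((m:ℝ)/2) * ((max 0 (2 ^ (q-1) - |(r:ℤ) - 2 ^ (q-1)|) : ℤ) : ℝ) / 2 ^ n := by
    have h7 := fs_eval_int m n i₀ k h
    rw [hd1, hnm1] at h7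
    exact h7
  have hrltz : (r:ℤ) < 2 ^ (q-1) * 2 := by exact_mod_cast hrlt
  have hBz : (0:ℤ) < 2 ^ (q-1) := by positivity
  rcases lt_or_ge r (2 ^ (q-1)) with hcr | hcr
  · have hcrz : (r:ℤ) < 2 ^ (q-1) := by exact_mod_cast hcr
    rw [e1, e2, if_pos (hpar.mpr hcr)]
    have m2 : (0 ⊔ (2 ^ (q-1) - |(r:ℤ) + 1 - 2 ^ (q-1)|)) = (r:ℤ) + 1 := by
      rw [abs_of_nonpos (by linarith),
        show (2:ℤ) ^ (q-1) - -((r:ℤ) + 1 - 2 ^ (q-1)) = (r:ℤ) + 1 from by ring]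
      exact max_eq_right (by positivity)
    have m1 : (0 ⊔ (2 ^ (q-1) - |(r:ℤ) - 2 ^ (q-1)|)) = (r:ℤ) := by
      rw [abs_of_nonpos (by linarith),
        show (2:ℤ) ^ (q-1) - -((r:ℤ) - 2 ^ (q-1)) = (r:ℤ) from by ring]
      exact max_eq_right (by positivity)
    rw [m1, m2]; push_cast; ring
  · have hcrz : (2:ℤ) ^ (q-1) ≤ (r:ℤ) := by exact_mod_cast hcr
    rw [e1, e2, if_neg (by rw [hpar]; omega)]
    have m2 : (0 ⊔ (2 ^ (q-1) - |(r:ℤ) + 1 - 2 ^ (q-1)|)) = 2 ^ (q-1) * 2 - (r:ℤ) - 1 := by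
      rw [abs_of_nonneg (by linarith),
        show (2:ℤ) ^ (q-1) - ((r:ℤ) + 1 - 2 ^ (q-1)) = 2 ^ (q-1) * 2 - (r:ℤ) - 1 from by ring]
      exact max_eq_right (by linarith)
    have m1 : (0 ⊔ (2 ^ (q-1) - |(r:ℤ) - 2 ^ (q-1)|)) = 2 ^ (q-1) * 2 - (r:ℤ) := by
      rw [abs_of_nonneg (by linarith),
        show (2:ℤ) ^ (q-1) - ((r:ℤ) - 2 ^ (q-1)) = 2 ^ (q-1) * 2 - (r:ℤ) from by ring]
      exact max_eq_right (by linarith)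
    rw [m1, m2]; push_cast; ring

/-- under the uniform magnitude condition `θ_{m,k} = c_m σ_{m,k}`, the
normalized dyadic increment of the Faber–Schauder series over `[k2^{−n},(k+1)2^{−n}]`
is `2^{n/p} Δ_k^n x = Σ_{j=1}^n ρ^j y_{n−j} ε_j(k)`, where `ρ = 2^{−(1−1/p)}`,
`y_m = 2^{m(1/p−1/2)} c_m`, and `ε_j(k)` is the product of the coefficient sign
`σ_{n−j,⌊k/2^j⌋}` and the Haar sign (`+1` iff `⌊k/2^{j−1}⌋` is even). -/
theorem stmt16 (p : ℝ) (hp : 1 < p)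
    (θ : ℕ → ℕ → ℝ) (c : ℕ → ℝ) (σ : ℕ → ℕ → ℝ)
    (hc : ∀ m, 0 ≤ c m) (hσ : ∀ m k, σ m k = 1 ∨ σ m k = -1)
    (hθ : ∀ m k, θ m k = c m * σ m k)
    (n : ℕ) (hn : 1 ≤ n) (k : ℕ) (hk : k < 2 ^ n) :
    (2 : ℝ) ^ ((n : ℝ) / p) *
        ((∑' m : ℕ, ∑ i ∈ Finset.range (2 ^ m),
            θ m i * faberSchauder m i (((k : ℝ) + 1) / 2 ^ n)) -
          (∑' m : ℕ, ∑ i ∈ Finset.range (2 ^ m),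
            θ m i * faberSchauder m i ((k : ℝ) / 2 ^ n)))
      = ∑ j ∈ Finset.Icc 1 n,
          ((2 : ℝ) ^ (-(1 - 1 / p))) ^ j *
            ((2 : ℝ) ^ (((n - j : ℕ) : ℝ) * (1 / p - 1 / 2)) * c (n - j)) *
            (σ (n - j) (k / 2 ^ j) *
              (if k / 2 ^ (j - 1) % 2 = 0 then (1 : ℝ) else -1)) := by
  have hk1 : ((k : ℝ) + 1) = ((k + 1 : ℕ) : ℝ) := by push_cast; ring
  have S2 : (∑' m : ℕ, ∑ i ∈ Finset.range (2 ^ m),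
      θ m i * faberSchauder m i (((k : ℝ) + 1) / 2 ^ n)) =
      ∑ m ∈ Finset.range n, ∑ i ∈ Finset.range (2 ^ m),
        θ m i * faberSchauder m i (((k : ℝ) + 1) / 2 ^ n) := by
    apply tsum_eq_sum
    intro m hm
    apply Finset.sum_eq_zero
    intro i _
    rw [hk1, fs_zero_high m n i (k+1) (by simpa using hm), mul_zero]
  have S1 : (∑' m : ℕ, ∑ i ∈ Finset.range (2 ^ m),
      θ m i * faberSchauder m i ((k : ℝ) / 2 ^ n)) =
      ∑ m ∈ Finset.range n, ∑ i ∈ Finset.range (2 ^ m),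
        θ m i * faberSchauder m i ((k : ℝ) / 2 ^ n) := by
    apply tsum_eq_sum
    intro m hm
    apply Finset.sum_eq_zero
    intro i _
    rw [fs_zero_high m n i k (by simpa using hm), mul_zero]
  rw [S1, S2, ← Finset.sum_sub_distrib]
  have inner : ∀ m ∈ Finset.range n,
      ((∑ i ∈ Finset.range (2 ^ m), θ m i * faberSchauder m i (((k : ℝ) + 1) / 2 ^ n)) -
        ∑ i ∈ Finset.range (2 ^ m), θ m i * faberSchauder m i ((k : ℝ) / 2 ^ n)) =
      θ m (k / 2 ^ (n - m)) *
        ((if k / 2 ^ (n - m - 1) % 2 = 0 then (1:ℝ) else -1) * 2 ^ ((m:ℝ)/2) / 2 ^ n) := by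
    intro m hm
    have hmn : m < n := Finset.mem_range.mp hm
    rw [← Finset.sum_sub_distrib]
    have hmem : k / 2 ^ (n - m) ∈ Finset.range (2 ^ m) := by
      rw [Finset.mem_range, Nat.div_lt_iff_lt_mul (by positivity)]
      calc k < 2 ^ n := hk
        _ = 2 ^ m * 2 ^ (n - m) := by rw [← pow_add]; congr 1; omega
    rw [show (∑ i ∈ Finset.range (2 ^ m), (θ m i * faberSchauder m i (((k : ℝ) + 1) / 2 ^ n) -
        θ m i * faberSchauder m i ((k : ℝ) / 2 ^ n))) =
        ∑ i ∈ Finset.range (2 ^ m), θ m i * (faberSchauder m i (((k : ℝ) + 1) / 2 ^ n) -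
          faberSchauder m i ((k : ℝ) / 2 ^ n)) from by
      apply Finset.sum_congr rfl; intro i _; ring]
    rw [Finset.sum_eq_single_of_mem _ hmem]
    · rw [fs_inc_main m n k hmn]
    · intro i _ hi
      obtain ⟨hz2, hz1⟩ := fs_inc_ne m n k i hmn hi
      rw [hz1, hz2]
      ring
  rw [Finset.sum_congr rfl inner, Finset.mul_sum]
  -- reindex m = n - j
  rw [show Finset.range n = (Finset.Icc 1 n).image (fun j => n - j) from ?_]
  · rw [Finset.sum_image ?_]
    · apply Finset.sum_congr rfl
      intro j hj
      obtain ⟨hj1, hjn⟩ := Finset.mem_Icc.mp hj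
      have hp0 : p ≠ 0 := by linarith
      have ha : ((n - j : ℕ) : ℝ) = (n:ℝ) - j := by
        have : ((n - j : ℕ) : ℤ) = (n:ℤ) - j := by omega
        exact_mod_cast congrArg (Int.cast : ℤ → ℝ) this
      have hP : (2:ℝ) ^ ((n:ℝ)/p) * 2 ^ (((n-j : ℕ):ℝ)/2) / 2 ^ n
          = ((2:ℝ) ^ (-(1 - 1/p))) ^ j * 2 ^ (((n-j : ℕ):ℝ) * (1/p - 1/2)) := by
        rw [← Real.rpow_add two_pos, ← Real.rpow_natCast 2 n, ← Real.rpow_sub two_pos,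
          ← Real.rpow_natCast ((2:ℝ) ^ (-(1 - 1/p))) j,
          ← Real.rpow_mul (by norm_num : (0:ℝ) ≤ 2), ← Real.rpow_add two_pos]
        congr 1
        rw [ha]
        field_simp
        ring
      rw [show n - (n - j) = j from by omega, hθ]
      linear_combination c (n - j) * σ (n - j) (k / 2 ^ j) *
        (if k / 2 ^ (j - 1) % 2 = 0 then (1:ℝ) else -1) * hP
    · intro a ha b hb hab
      simp only [Finset.coe_Icc, Set.mem_Icc, Finset.mem_coe, Finset.mem_Icc] at ha hb hab
      omega
  · ext m
    simp only [Finset.mem_range, Finset.mem_image, Finset.mem_Icc]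
    constructor
    · intro hm; exact ⟨n - m, ⟨by omega, by omega⟩, by omega⟩
    · rintro ⟨j, ⟨hj1, hjn⟩, rfl⟩; omega
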